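/- Let d ≥ 2, p ∈ (2d/(d+1), 2), set α_p = p(d+1) − 2d, and let k ∈ (0, α_p). Then for every nonnegative measurable ρ on ℝ^d with ρ^{1/p'} ∈ W^{1,p}(ℝ^d) and ∫ ρ(x)⟨x⟩^k dx < ∞, one has ∫_{ℝ^d} |∇ρ|^{p−1} |∇(⟨x⟩^k)| dx ≤ k (∫_{ℝ^d} ρ(x) ⟨x⟩^k dx)^{1/p'} · I_p(ρ)^{1/p'} · (∫_{ℝ^d} ⟨x⟩^{(k−p)/(2−p)} dx)^{(2−p)/p}, where the last integral is finite. -/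

import Mathlib

open MeasureTheory Real Set
open scoped ENNReal NNReal

noncomputable section

abbrev Ed (d : ℕ) := EuclideanSpace ℝ (Fin d)

def jap {d : ℕ} (x : Ed d) : ℝ := Real.sqrt (1 + ‖x‖ ^ 2)

def LqNorm {d : ℕ} (q : ℝ) (f : Ed d → ℝ) : ℝ := (∫ x : Ed d, |f x| ^ q) ^ (1 / q)

def pconj (p : ℝ) : ℝ := p / (p - 1)

def pstar (d : ℕ) (p : ℝ) : ℝ := d * p / (d - p)

def alphaP (d : ℕ) (p : ℝ) : ℝ := p * (d + 1) - 2 * d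

def MemW1p {d : ℕ} (p : ℝ) (u : Ed d → ℝ) : Prop :=
  Differentiable ℝ u ∧ MemLp u (ENNReal.ofReal p) volume ∧
    MemLp (fun x => ‖gradient u x‖) (ENNReal.ofReal p) volume

def fisherInfo {d : ℕ} (p : ℝ) (ρ : Ed d → ℝ) : ℝ :=
  pconj p ^ p * ∫ x : Ed d, ‖gradient (fun y => ρ y ^ ((p - 1) / p)) x‖ ^ p

def Kker (d : ℕ) (α : ℝ) (x : Ed d) : Ed d := ‖x‖ ^ (-α) • x


variable {d : ℕ}

lemma one_add_sq_pos (x : Ed d) : (0:ℝ) < 1 + ‖x‖ ^ 2 := by positivity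

lemma jap_eq (x : Ed d) : jap x = (1 + ‖x‖ ^ 2) ^ (1/2 : ℝ) := by
  rw [jap, Real.sqrt_eq_rpow]

lemma jap_pos (x : Ed d) : 0 < jap x := by
  rw [jap_eq]; positivity

lemma jap_rpow (x : Ed d) (e : ℝ) : jap x ^ e = (1 + ‖x‖ ^ 2) ^ (e/2) := by
  rw [jap_eq, ← Real.rpow_mul (one_add_sq_pos x).le]
  rw [show (1/2*e : ℝ) = e/2 by ring]

lemma norm_le_jap (x : Ed d) : ‖x‖ ≤ jap x := by
  rw [jap]
  rw [Real.le_sqrt (norm_nonneg x)]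
  · linarith [sq_nonneg ‖x‖]
  · positivity


lemma continuous_jap : Continuous (jap (d := d)) := by
  unfold jap; fun_prop

lemma norm_gradient_eq (f : Ed d → ℝ) (x : Ed d) : ‖gradient f x‖ = ‖fderiv ℝ f x‖ := by
  rw [gradient, LinearIsometryEquiv.norm_map]

lemma measurable_norm_gradient (f : Ed d → ℝ) : Measurable fun x => ‖gradient f x‖ := by
  simp only [norm_gradient_eq]
  exact (measurable_fderiv ℝ f).norm

lemma hasFDerivAt_one_add_sq (x : Ed d) :
    HasFDerivAt (fun y : Ed d => 1 + ‖y‖ ^ 2) (2 • (innerSL ℝ x)) x := by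
  have h := (hasFDerivAt_id x).norm_sq
  simpa using h.const_add 1

lemma hasFDerivAt_jap_rpow (k : ℝ) (x : Ed d) :
    HasFDerivAt (fun y : Ed d => jap y ^ k)
      ((k/2 * (1 + ‖x‖ ^ 2) ^ (k/2 - 1)) • (2 • (innerSL ℝ x))) x := by
  have houter : HasDerivAt (fun t : ℝ => t ^ (k/2))
      (k/2 * (1 + ‖x‖ ^ 2) ^ (k/2 - 1)) (1 + ‖x‖ ^ 2) :=
    Real.hasDerivAt_rpow_const (Or.inl (one_add_sq_pos x).ne')
  have h := houter.comp_hasFDerivAt x (hasFDerivAt_one_add_sq x)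
  have heq : (fun y : Ed d => jap y ^ k) = fun y : Ed d => (1 + ‖y‖ ^ 2) ^ (k/2) :=
    funext fun y => jap_rpow y k
  rw [heq]
  exact h

lemma gradient_jap_rpow_norm_le {k : ℝ} (hk : 0 < k) (x : Ed d) :
    ‖gradient (fun y : Ed d => jap y ^ k) x‖ ≤ k * jap x ^ (k - 1) := by
  rw [norm_gradient_eq, (hasFDerivAt_jap_rpow k x).fderiv]
  have h1 : ‖(2 • (innerSL ℝ x) : Ed d →L[ℝ] ℝ)‖ ≤ 2 * ‖x‖ := by
    rw [two_smul]
    refine (norm_add_le _ _).trans ?_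
    rw [innerSL_apply_norm]
    linarith
  have h2 : (0:ℝ) ≤ (1 + ‖x‖ ^ 2) ^ (k/2 - 1) := by positivity
  calc ‖(k/2 * (1 + ‖x‖ ^ 2) ^ (k/2 - 1)) • (2 • (innerSL ℝ x) : Ed d →L[ℝ] ℝ)‖
      = (k/2 * (1 + ‖x‖ ^ 2) ^ (k/2 - 1)) * ‖(2 • (innerSL ℝ x) : Ed d →L[ℝ] ℝ)‖ := by
        rw [norm_smul (k / 2 * (1 + ‖x‖ ^ 2) ^ (k / 2 - 1)) (2 • (innerSL ℝ) x)]
        congr 1; rw [Real.norm_eq_abs, abs_of_nonneg (by positivity)]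
    _ ≤ (k/2 * (1 + ‖x‖ ^ 2) ^ (k/2 - 1)) * (2 * ‖x‖) := by
        apply mul_le_mul_of_nonneg_left h1 (by positivity)
    _ = k * ((1 + ‖x‖ ^ 2) ^ (k/2 - 1) * ‖x‖) := by ring
    _ ≤ k * (jap x ^ (k-2) * jap x) := by
        apply mul_le_mul_of_nonneg_left _ hk.le
        rw [jap_rpow x (k-2), show (k-2)/2 = k/2 - 1 by ring]
        exact mul_le_mul_of_nonneg_left (norm_le_jap x) h2
    _ = k * jap x ^ (k - 1) := by
        rw [← Real.rpow_add_one (jap_pos x).ne' (k-2), show k-2+1 = k-1 by ring]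

lemma integrable_jap_rpow {e : ℝ} (he : (d : ℝ) < -e) :
    Integrable (fun x : Ed d => jap x ^ e) := by
  have h := integrable_rpow_neg_one_add_norm_sq (E := Ed d) (μ := volume) (r := -e)
    (by rwa [finrank_euclideanSpace_fin])
  refine h.congr (ae_of_all volume fun x => ?_)
  simp only
  rw [jap_rpow]
  norm_num

lemma gradient_rho_norm {p : ℝ} (hp1 : 1 < p) (ρ : Ed d → ℝ)
    (hρ0 : ∀ x, 0 ≤ ρ x)
    (hu : Differentiable ℝ (fun x => ρ x ^ ((p - 1) / p))) (x : Ed d) :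
    ‖gradient ρ x‖ ^ (p - 1) =
      (p / (p - 1)) ^ (p - 1) * ρ x ^ ((p - 1) / p) *
        ‖gradient (fun y => ρ y ^ ((p - 1) / p)) x‖ ^ (p - 1) := by
  set u : Ed d → ℝ := fun y => ρ y ^ ((p - 1) / p) with hu_def
  have hpm : (0:ℝ) < p - 1 := by linarith
  have hp0 : (0:ℝ) < p := by linarith
  set q : ℝ := p / (p - 1) with hq_def
  have hq1 : 1 ≤ q := by
    rw [hq_def, le_div_iff₀ hpm]; linarith
  have hux : 0 ≤ u x := Real.rpow_nonneg (hρ0 x) _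
  have hρeq : ρ = fun y => u y ^ q := by
    funext y
    rw [hu_def]
    rw [← Real.rpow_mul (hρ0 y)]
    rw [show (p-1)/p * q = 1 by rw [hq_def]; field_simp]
    exact (Real.rpow_one _).symm
  have houter : HasDerivAt (fun t : ℝ => t ^ q) (q * (u x) ^ (q - 1)) (u x) :=
    Real.hasDerivAt_rpow_const (Or.inr hq1)
  have h : HasFDerivAt (fun y => u y ^ q) ((q * (u x) ^ (q - 1)) • fderiv ℝ u x) x :=
    houter.comp_hasFDerivAt x (hu x).hasFDerivAt
  rw [norm_gradient_eq, norm_gradient_eq, hρeq, h.fderiv, norm_smul]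
  have hc : (0:ℝ) ≤ q * (u x) ^ (q - 1) := by
    apply mul_nonneg (by positivity) (Real.rpow_nonneg hux _)
  rw [Real.norm_eq_abs, abs_of_nonneg hc]
  rw [Real.mul_rpow hc (norm_nonneg _), Real.mul_rpow (by positivity) (Real.rpow_nonneg hux _)]
  rw [← Real.rpow_mul hux]
  rw [show (q - 1) * (p - 1) = 1 by rw [hq_def]; field_simp; ring]
  rw [Real.rpow_one]
  have hmid : (fun y => u y ^ q) x ^ ((p - 1) / p) = u x := by
    simp only
    rw [← Real.rpow_mul hux, show q * ((p - 1) / p) = 1 by rw [hq_def]; field_simp,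
      Real.rpow_one]
  rw [hmid]


lemma measurable_jap_rpow (c : ℝ) : Measurable fun x : Ed d => jap x ^ c :=
  (continuous_jap.rpow_const fun x => Or.inl (jap_pos x).ne').measurable

/-- for `p ∈ (2d/(d+1), 2)` and `k ∈ (0, α_p)`,
`∫ |∇ρ|^{p-1} |∇(⟨x⟩^k)| dx
  ≤ k (∫ ρ ⟨x⟩^k)^{1/p'} I_p(ρ)^{1/p'} (∫ ⟨x⟩^{(k-p)/(2-p)})^{(2-p)/p}`,
the last integral being finite. -/
theorem statement4 (d : ℕ) (p k : ℝ) (hd : 2 ≤ d)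
    (hp1 : 2 * (d : ℝ) / ((d : ℝ) + 1) < p) (hp2 : p < 2)
    (hk0 : 0 < k) (hk1 : k < alphaP d p)
    (ρ : Ed d → ℝ) (hρ0 : ∀ x, 0 ≤ ρ x) (hρmeas : Measurable ρ)
    (hρdiff : Differentiable ℝ ρ)
    (hW : MemW1p p fun x => ρ x ^ ((p - 1) / p))
    (hmom : Integrable fun x => ρ x * jap x ^ k) :
    Integrable (fun x : Ed d => jap x ^ ((k - p) / (2 - p))) ∧
      (Integrable fun x =>
        ‖gradient ρ x‖ ^ (p - 1) * ‖gradient (fun y => jap y ^ k) x‖) ∧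
      (∫ x : Ed d, ‖gradient ρ x‖ ^ (p - 1) * ‖gradient (fun y => jap y ^ k) x‖) ≤
        k * (∫ x : Ed d, ρ x * jap x ^ k) ^ ((p - 1) / p) *
          fisherInfo p ρ ^ ((p - 1) / p) *
          (∫ x : Ed d, jap x ^ ((k - p) / (2 - p))) ^ ((2 - p) / p) := by
  
  -- numeric facts
  have hd2 : (2:ℝ) ≤ (d:ℝ) := by exact_mod_cast hd
  have hp1' : (1:ℝ) < p := by
    have h1 : (1:ℝ) < 2 * (d:ℝ) / ((d:ℝ) + 1) := by
      rw [lt_div_iff₀ (by linarith)]; linarith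
    linarith
  have hpm : (0:ℝ) < p - 1 := by linarith
  have hp0 : (0:ℝ) < p := by linarith
  have h2p : (0:ℝ) < 2 - p := by linarith
  have hd0 : (0:ℝ) < (d:ℝ) := by linarith
  have hαp : alphaP d p < p := by unfold alphaP; nlinarith
  have hkp : k < p := lt_trans hk1 hαp
  have he : (d:ℝ) < -((k - p) / (2 - p)) := by
    have h1 : (d:ℝ) * (2 - p) < p - k := by unfold alphaP at hk1; nlinarith
    rw [show -((k - p) / (2 - p)) = (p - k)/(2 - p) by ring, lt_div_iff₀ h2p]
    linarith
  have hC : Integrable (fun x : Ed d => jap x ^ ((k - p) / (2 - p))) := integrable_jap_rpow he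
  refine ⟨hC, ?_⟩
  -- setup
  set u : Ed d → ℝ := fun y => ρ y ^ ((p - 1) / p) with hu_def
  obtain ⟨hudiff, humem, hgmem⟩ := hW
  have hu0 : ∀ x, 0 ≤ u x := fun x => by
    rw [hu_def]; exact Real.rpow_nonneg (hρ0 x) _
  have hu_meas : Measurable u := hudiff.continuous.measurable
  have hG_meas : Measurable fun x => ‖gradient u x‖ := measurable_norm_gradient u
  have hG0 : ∀ x, (0:ℝ) ≤ ‖gradient u x‖ := fun x => norm_nonneg _
  have hrpow1 : Measurable fun t : ℝ => t ^ (p - 1) := by fun_prop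
  have hrpowp : Measurable fun t : ℝ => t ^ p := by fun_prop
  -- integrability of |∇u|^p
  have hB : Integrable (fun x => ‖gradient u x‖ ^ p) := by
    have h0 : (ENNReal.ofReal p) ≠ 0 := (ENNReal.ofReal_pos.mpr hp0).ne'
    have h := hgmem.integrable_norm_rpow h0 ENNReal.ofReal_ne_top
    rw [ENNReal.toReal_ofReal hp0.le] at h
    refine h.congr (ae_of_all _ fun x => ?_)
    simp only [norm_norm]
  set A := ∫ x : Ed d, ρ x * jap x ^ k with hA_def
  set B := ∫ x : Ed d, ‖gradient u x‖ ^ p with hB_def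
  set C := ∫ x : Ed d, jap x ^ ((k - p) / (2 - p)) with hC_def
  have hA0 : 0 ≤ A := integral_nonneg fun x =>
    mul_nonneg (hρ0 x) (Real.rpow_nonneg (jap_pos x).le _)
  have hB0 : 0 ≤ B := integral_nonneg fun x => Real.rpow_nonneg (hG0 x) _
  have hC0 : 0 ≤ C := integral_nonneg fun x => Real.rpow_nonneg (jap_pos x).le _
  -- nonnegativity of real building blocks
  have hf1nn : ∀ x : Ed d, (0:ℝ) ≤ u x * jap x ^ (k * (p-1)/p) := fun x =>
    mul_nonneg (hu0 x) (Real.rpow_nonneg (jap_pos x).le _)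
  have hf2nn : ∀ x : Ed d, (0:ℝ) ≤ ‖gradient u x‖ ^ (p-1) := fun x =>
    Real.rpow_nonneg (hG0 x) _
  have hf3nn : ∀ x : Ed d, (0:ℝ) ≤ jap x ^ ((k-p)/p) := fun x =>
    Real.rpow_nonneg (jap_pos x).le _
  -- measurability of ENNReal building blocks
  have hm1 : AEMeasurable (fun x : Ed d => ENNReal.ofReal (u x * jap x ^ (k * (p-1)/p)))
      volume := ((hu_meas.mul (measurable_jap_rpow _)).ennreal_ofReal).aemeasurable
  have hm2 : AEMeasurable (fun x : Ed d => ENNReal.ofReal (‖gradient u x‖ ^ (p-1)))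
      volume := (((hrpow1.comp hG_meas)).ennreal_ofReal).aemeasurable
  have hm3 : AEMeasurable (fun x : Ed d => ENNReal.ofReal (jap x ^ ((k-p)/p)))
      volume := ((measurable_jap_rpow _).ennreal_ofReal).aemeasurable
  -- pointwise rpow identities
  have hq0 : (0:ℝ) < p / (p - 1) := by positivity
  have hρu : ∀ x, u x ^ (p/(p-1)) = ρ x := fun x => by
    simp only [hu_def]
    rw [← Real.rpow_mul (hρ0 x), show (p-1)/p * (p/(p-1)) = 1 by field_simp, Real.rpow_one]
  have e1eq : ∀ x : Ed d, ENNReal.ofReal (u x * jap x ^ (k * (p-1)/p)) ^ (p/(p-1))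
      = ENNReal.ofReal (ρ x * jap x ^ k) := by
    intro x
    rw [ENNReal.ofReal_rpow_of_nonneg (hf1nn x) hq0.le]
    congr 1
    rw [Real.mul_rpow (hu0 x) (Real.rpow_nonneg (jap_pos x).le _), hρu x,
      ← Real.rpow_mul (jap_pos x).le, show k * (p-1)/p * (p/(p-1)) = k by field_simp]
  have e2eq : ∀ x : Ed d, (ENNReal.ofReal (‖gradient u x‖ ^ (p-1)) ^ p) ^ (1/(p-1))
      = ENNReal.ofReal (‖gradient u x‖ ^ p) := by
    intro x
    rw [← ENNReal.rpow_mul, ENNReal.ofReal_rpow_of_nonneg (hf2nn x) (by positivity),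
      ← Real.rpow_mul (hG0 x), show (p-1) * (p * (1/(p-1))) = p by field_simp]
  have e3eq : ∀ x : Ed d, (ENNReal.ofReal (jap x ^ ((k-p)/p)) ^ p) ^ (1/(2-p))
      = ENNReal.ofReal (jap x ^ ((k-p)/(2-p))) := by
    intro x
    rw [← ENNReal.rpow_mul, ENNReal.ofReal_rpow_of_nonneg (hf3nn x) (by positivity),
      ← Real.rpow_mul (jap_pos x).le,
      show (k-p)/p * (p * (1/(2-p))) = (k-p)/(2-p) by field_simp]
  -- lintegral identities
  have hL1 : (∫⁻ x : Ed d, ENNReal.ofReal (ρ x * jap x ^ k)) = ENNReal.ofReal A :=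
    (ofReal_integral_eq_lintegral_ofReal hmom (ae_of_all _ fun x =>
      mul_nonneg (hρ0 x) (Real.rpow_nonneg (jap_pos x).le _))).symm
  have hL2 : (∫⁻ x : Ed d, ENNReal.ofReal (‖gradient u x‖ ^ p)) = ENNReal.ofReal B :=
    (ofReal_integral_eq_lintegral_ofReal hB (ae_of_all _ fun x =>
      Real.rpow_nonneg (hG0 x) _)).symm
  have hL3 : (∫⁻ x : Ed d, ENNReal.ofReal (jap x ^ ((k-p)/(2-p)))) = ENNReal.ofReal C :=
    (ofReal_integral_eq_lintegral_ofReal hC (ae_of_all _ fun x =>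
      Real.rpow_nonneg (jap_pos x).le _)).symm
  -- Hölder inequalities
  have hconj1 : Real.HolderConjugate (p/(p-1)) p := by
    rw [Real.holderConjugate_iff]; constructor
    · rw [lt_div_iff₀ hpm]; linarith
    · rw [inv_div]; field_simp; ring
  have hconj2 : Real.HolderConjugate (1/(p-1)) (1/(2-p)) := by
    rw [Real.holderConjugate_iff]; constructor
    · rw [lt_div_iff₀ hpm]; linarith
    · rw [one_div, inv_inv, one_div, inv_inv]; ring
  have hH1 := ENNReal.lintegral_mul_le_Lp_mul_Lq volume hconj1 hm1 (hm2.mul hm3)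
  have hH2 := ENNReal.lintegral_mul_le_Lp_mul_Lq volume hconj2
    ((hm2.pow_const p)) ((hm3.pow_const p))
  simp only [Pi.mul_apply] at hH1 hH2
  -- rewrite Hölder 2
  have hH2' : (∫⁻ x : Ed d, ENNReal.ofReal (‖gradient u x‖ ^ (p-1)) ^ p
        * ENNReal.ofReal (jap x ^ ((k-p)/p)) ^ p)
      ≤ ENNReal.ofReal B ^ (p-1) * ENNReal.ofReal C ^ (2-p) := by
    refine hH2.trans_eq ?_
    rw [show (∫⁻ x : Ed d, (ENNReal.ofReal (‖gradient u x‖ ^ (p-1)) ^ p) ^ (1/(p-1)))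
        = ENNReal.ofReal B from by rw [← hL2]; exact lintegral_congr fun x => e2eq x]
    rw [show (∫⁻ x : Ed d, (ENNReal.ofReal (jap x ^ ((k-p)/p)) ^ p) ^ (1/(2-p)))
        = ENNReal.ofReal C from by rw [← hL3]; exact lintegral_congr fun x => e3eq x]
    rw [one_div_one_div, one_div_one_div]
  -- rewrite Hölder 1
  have hH1' : (∫⁻ x : Ed d, ENNReal.ofReal (u x * jap x ^ (k * (p-1)/p))
        * (ENNReal.ofReal (‖gradient u x‖ ^ (p-1)) * ENNReal.ofReal (jap x ^ ((k-p)/p))))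
      ≤ ENNReal.ofReal A ^ ((p-1)/p)
        * (ENNReal.ofReal B ^ (p-1) * ENNReal.ofReal C ^ (2-p)) ^ (1/p) := by
    refine hH1.trans ?_
    rw [show (∫⁻ x : Ed d, ENNReal.ofReal (u x * jap x ^ (k * (p-1)/p)) ^ (p/(p-1)))
        = ENNReal.ofReal A from by rw [← hL1]; exact lintegral_congr fun x => e1eq x]
    rw [show (1 : ℝ)/(p/(p-1)) = (p-1)/p by rw [one_div_div]]
    refine mul_le_mul_right ?_ _
    refine ENNReal.rpow_le_rpow ?_ (by positivity)
    refine le_of_eq_of_le (lintegral_congr fun x => ?_) hH2'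
    exact ENNReal.mul_rpow_of_nonneg _ _ hp0.le
  -- pointwise bound on the integrand
  have hgrρ : ∀ x, ‖gradient ρ x‖ ^ (p - 1)
      = (p/(p-1)) ^ (p-1) * u x * ‖gradient u x‖ ^ (p-1) := fun x => by
    have := gradient_rho_norm hp1' ρ hρ0 (by rw [← hu_def] at *; exact hudiff) x
    rw [this, hu_def]
  have hcnn : (0:ℝ) ≤ k * (p/(p-1)) ^ (p-1) := by positivity
  have hpt : ∀ x : Ed d,
      ENNReal.ofReal (‖gradient ρ x‖ ^ (p - 1) * ‖gradient (fun y => jap y ^ k) x‖)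
      ≤ ENNReal.ofReal (k * (p/(p-1)) ^ (p-1))
        * (ENNReal.ofReal (u x * jap x ^ (k * (p-1)/p))
          * (ENNReal.ofReal (‖gradient u x‖ ^ (p-1)) * ENNReal.ofReal (jap x ^ ((k-p)/p)))) := by
    intro x
    have hjapsplit : jap x ^ (k - 1) = jap x ^ (k * (p-1)/p) * jap x ^ ((k-p)/p) := by
      rw [← Real.rpow_add (jap_pos x)]
      congr 1
      field_simp
      ring
    have hreal : ‖gradient ρ x‖ ^ (p - 1) * ‖gradient (fun y => jap y ^ k) x‖
        ≤ (k * (p/(p-1)) ^ (p-1)) * ((u x * jap x ^ (k * (p-1)/p))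
          * (‖gradient u x‖ ^ (p-1) * jap x ^ ((k-p)/p))) := by
      rw [hgrρ x]
      calc (p/(p-1)) ^ (p-1) * u x * ‖gradient u x‖ ^ (p-1)
            * ‖gradient (fun y => jap y ^ k) x‖
          ≤ (p/(p-1)) ^ (p-1) * u x * ‖gradient u x‖ ^ (p-1) * (k * jap x ^ (k-1)) := by
            refine mul_le_mul_of_nonneg_left (gradient_jap_rpow_norm_le hk0 x) ?_
            exact mul_nonneg (mul_nonneg (Real.rpow_nonneg hq0.le _) (hu0 x)) (hf2nn x)
        _ = (k * (p/(p-1)) ^ (p-1)) * ((u x * jap x ^ (k * (p-1)/p))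
            * (‖gradient u x‖ ^ (p-1) * jap x ^ ((k-p)/p))) := by
            rw [hjapsplit]; ring
    calc ENNReal.ofReal (‖gradient ρ x‖ ^ (p - 1) * ‖gradient (fun y => jap y ^ k) x‖)
        ≤ ENNReal.ofReal ((k * (p/(p-1)) ^ (p-1)) * ((u x * jap x ^ (k * (p-1)/p))
          * (‖gradient u x‖ ^ (p-1) * jap x ^ ((k-p)/p)))) := ENNReal.ofReal_le_ofReal hreal
      _ = _ := by
          rw [ENNReal.ofReal_mul hcnn, ENNReal.ofReal_mul (hf1nn x),
            ENNReal.ofReal_mul (hf2nn x)]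
  -- main lintegral bound
  set cE : ℝ≥0∞ := ENNReal.ofReal (k * (p/(p-1)) ^ (p-1)) with hcE
  set RE : ℝ≥0∞ := ENNReal.ofReal A ^ ((p-1)/p)
    * (ENNReal.ofReal B ^ (p-1) * ENNReal.ofReal C ^ (2-p)) ^ (1/p) with hRE
  have hlint : (∫⁻ x : Ed d, ENNReal.ofReal
        (‖gradient ρ x‖ ^ (p - 1) * ‖gradient (fun y => jap y ^ k) x‖)) ≤ cE * RE := by
    calc (∫⁻ x : Ed d, ENNReal.ofReal
          (‖gradient ρ x‖ ^ (p - 1) * ‖gradient (fun y => jap y ^ k) x‖))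
        ≤ ∫⁻ x : Ed d, cE * (ENNReal.ofReal (u x * jap x ^ (k * (p-1)/p))
          * (ENNReal.ofReal (‖gradient u x‖ ^ (p-1)) * ENNReal.ofReal (jap x ^ ((k-p)/p)))) :=
          lintegral_mono fun x => hpt x
      _ = cE * ∫⁻ x : Ed d, ENNReal.ofReal (u x * jap x ^ (k * (p-1)/p))
          * (ENNReal.ofReal (‖gradient u x‖ ^ (p-1)) * ENNReal.ofReal (jap x ^ ((k-p)/p))) :=
          lintegral_const_mul' _ _ ENNReal.ofReal_ne_top
      _ ≤ cE * RE := mul_le_mul_right hH1' _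
  have hRE_ne_top : cE * RE ≠ ⊤ := by
    refine ENNReal.mul_ne_top ENNReal.ofReal_ne_top ?_
    refine ENNReal.mul_ne_top
      (ENNReal.rpow_ne_top_of_nonneg (by positivity) ENNReal.ofReal_ne_top) ?_
    refine ENNReal.rpow_ne_top_of_nonneg (by positivity) ?_
    exact ENNReal.mul_ne_top
      (ENNReal.rpow_ne_top_of_nonneg (by linarith) ENNReal.ofReal_ne_top)
      (ENNReal.rpow_ne_top_of_nonneg (by linarith) ENNReal.ofReal_ne_top)
  -- integrability of the integrand
  have hFmeas : Measurable fun x : Ed d =>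
      ‖gradient ρ x‖ ^ (p - 1) * ‖gradient (fun y => jap y ^ k) x‖ :=
    (hrpow1.comp (measurable_norm_gradient ρ)).mul
      (measurable_norm_gradient (fun y => jap y ^ k))
  have hFnn : ∀ x : Ed d, (0:ℝ) ≤ ‖gradient ρ x‖ ^ (p - 1)
      * ‖gradient (fun y => jap y ^ k) x‖ := fun x =>
    mul_nonneg (Real.rpow_nonneg (norm_nonneg _) _) (norm_nonneg _)
  have hFint : Integrable (fun x : Ed d =>
      ‖gradient ρ x‖ ^ (p - 1) * ‖gradient (fun y => jap y ^ k) x‖) := by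
    refine ⟨hFmeas.aestronglyMeasurable, ?_⟩
    rw [HasFiniteIntegral]
    rw [show (∫⁻ x : Ed d, (‖‖gradient ρ x‖ ^ (p - 1)
        * ‖gradient (fun y => jap y ^ k) x‖‖ₑ : ℝ≥0∞))
        = ∫⁻ x : Ed d, ENNReal.ofReal
          (‖gradient ρ x‖ ^ (p - 1) * ‖gradient (fun y => jap y ^ k) x‖) from
      lintegral_congr fun x => Real.enorm_eq_ofReal (hFnn x)]
    exact lt_of_le_of_lt hlint (lt_top_iff_ne_top.mpr hRE_ne_top)
  refine ⟨hFint, ?_⟩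
  -- convert to real inequality
  have hint_eq : (∫ x : Ed d, ‖gradient ρ x‖ ^ (p - 1) * ‖gradient (fun y => jap y ^ k) x‖)
      = (∫⁻ x : Ed d, ENNReal.ofReal
        (‖gradient ρ x‖ ^ (p - 1) * ‖gradient (fun y => jap y ^ k) x‖)).toReal :=
    integral_eq_lintegral_of_nonneg_ae (ae_of_all _ hFnn) hFmeas.aestronglyMeasurable
  have hle := ENNReal.toReal_mono hRE_ne_top hlint
  rw [← hint_eq] at hle
  refine hle.trans (le_of_eq ?_)
  -- compute the toReal of the right-hand side
  rw [hcE, hRE, ENNReal.toReal_mul, ENNReal.toReal_mul, ← ENNReal.toReal_rpow,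
    ← ENNReal.toReal_rpow, ENNReal.toReal_mul, ← ENNReal.toReal_rpow, ← ENNReal.toReal_rpow,
    ENNReal.toReal_ofReal hcnn, ENNReal.toReal_ofReal hA0, ENNReal.toReal_ofReal hB0,
    ENNReal.toReal_ofReal hC0]
  rw [fisherInfo]
  unfold pconj
  rw [← hu_def, ← hB_def]
  have h1 : (B ^ (p-1) * C ^ (2-p)) ^ ((1:ℝ)/p) = B ^ ((p-1)/p) * C ^ ((2-p)/p) := by
    rw [Real.mul_rpow (Real.rpow_nonneg hB0 _) (Real.rpow_nonneg hC0 _),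
      ← Real.rpow_mul hB0, ← Real.rpow_mul hC0,
      show (p-1)*(1/p) = (p-1)/p by ring, show (2-p)*(1/p) = (2-p)/p by ring]
  have h2 : ((p/(p-1)) ^ p * B) ^ ((p-1)/p) = (p/(p-1)) ^ (p-1) * B ^ ((p-1)/p) := by
    rw [Real.mul_rpow (Real.rpow_nonneg hq0.le _) hB0, ← Real.rpow_mul hq0.le,
      show p*((p-1)/p) = p-1 by field_simp]
  rw [h1, h2]
  ring
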